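/- Let $n, B_1$ be natural numbers with $2 \le n$ and $n < B_1 < 2n$, and set $s := 2n + 1 - B_1$ (so $s \ge 2$). Let $c, d \in \mathbb{C}$ with $c^{B_1 - n} = 1$ and $c^n \ne 1$, and define $\varphi(t) := c t + d t^s$. Let $q, \eta_2 : \mathbb{C} \to \mathbb{C}$ satisfy $q(t) - \tfrac{B_1}{n} t^{B_1 - n} = o(t^n)$ and $\eta_2(t) - t^{B_1} = o(t^{B_1})$ as $t \to 0$. For $(A, B) \in \mathbb{C}^2$ define $$W(t) := A\, t^{n}\, \big(-q(t),\ 1,\ 0,\ 0\big) + B\, \big(q(t) - q(\varphi(t)),\ 0,\ t^n - \varphi(t)^n,\ \eta_2(t) - \eta_2(\varphi(t))\big) \in \mathbb{C}^4.$$ Then $$\frac{1}{t^{n}}\, W(t) \longrightarrow \Big(-B\,\tfrac{B_1 (B_1 - n)}{n}\, c^{B_1 - n - 1}\, d,\ A,\ B\,(1 - c^n),\ 0\Big)$$ as $t \to 0$ along $t \ne 0$; moreover if $(A,B) \ne (0,0)$ this limit vector is nonzero (and its last coordinate is zero). -/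

import Mathlib

open Filter Asymptotics Topology

/-- Case B (`2n > B₁ > n`) of the proof of Theorem 3.8 of the paper. -/
theorem stmt_13 (n B1 : ℕ) (hn : 2 ≤ n) (hB1 : n < B1) (hB1' : B1 < 2 * n)
    (s : ℕ) (hs : s = 2 * n + 1 - B1)
    (c d : ℂ) (hc : c ^ (B1 - n) = 1) (hc' : c ^ n ≠ 1)
    (φ : ℂ → ℂ) (hφ : ∀ t, φ t = c * t + d * t ^ s)
    (q η2 : ℂ → ℂ)
    (hq : (fun t => q t - ((B1 : ℂ) / (n : ℂ)) * t ^ (B1 - n))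
      =o[𝓝[≠] (0:ℂ)] fun t => t ^ n)
    (hη2 : (fun t => η2 t - t ^ B1) =o[𝓝[≠] (0:ℂ)] fun t => t ^ B1)
    (A B : ℂ)
    (W : ℂ → Fin 4 → ℂ)
    (hW : ∀ t, W t =
      (A * t ^ n) • (![-q t, 1, 0, 0] : Fin 4 → ℂ) +
      B • (![q t - q (φ t), 0, t ^ n - φ t ^ n, η2 t - η2 (φ t)] : Fin 4 → ℂ)) :
    Tendsto (fun t => (t ^ n)⁻¹ • W t) (𝓝[≠] (0:ℂ))
      (𝓝 ![-B * (((B1 : ℂ) * ((B1 : ℂ) - (n : ℂ))) / (n : ℂ)) * c ^ (B1 - n - 1) * d,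
            A, B * (1 - c ^ n), 0]) ∧
    ((A, B) ≠ (0, 0) →
      (![-B * (((B1 : ℂ) * ((B1 : ℂ) - (n : ℂ))) / (n : ℂ)) * c ^ (B1 - n - 1) * d,
         A, B * (1 - c ^ n), 0] : Fin 4 → ℂ) ≠ 0) := by
  set l : Filter ℂ := 𝓝[≠] (0:ℂ) with hl
  set m : ℕ := B1 - n with hm
  have hm0 : m ≠ 0 := by omega
  have hmn : m + (s - 1) = n := by omega
  have hs2 : 2 ≤ s := by omega
  have hc0 : c ≠ 0 := by
    intro h
    rw [h, zero_pow hm0] at hc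
    exact one_ne_zero hc.symm
  set g : ℂ → ℂ := fun t => c + d * t ^ (s - 1) with hg_def
  have hφ' : ∀ t, φ t = t * g t := by
    intro t
    rw [hφ, hg_def]
    obtain ⟨u, hu⟩ : ∃ u, s = u + 1 := ⟨s - 1, by omega⟩
    simp only [hu, Nat.add_sub_cancel, pow_succ]
    ring
  -- g tends to c
  have hg_tendsto : Tendsto g l (𝓝 c) := by
    have h1 : Tendsto g (𝓝 0) (𝓝 (g 0)) := (Continuous.tendsto (by fun_prop) 0)
    have hg0 : g 0 = c := by
      simp [hg_def, zero_pow (by omega : s - 1 ≠ 0)]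
    rw [hg0] at h1
    exact h1.mono_left nhdsWithin_le_nhds
  -- powers tend to 0 within the punctured filter
  have hid0 : Tendsto (fun t : ℂ => t) l (𝓝 0) :=
    (continuous_id.tendsto 0).mono_left nhdsWithin_le_nhds
  have hpow0 : ∀ k : ℕ, k ≠ 0 → Tendsto (fun t : ℂ => t ^ k) l (𝓝 0) := by
    intro k hk
    have := (continuous_pow k (M := ℂ)).tendsto 0
    rw [zero_pow hk] at this
    exact this.mono_left nhdsWithin_le_nhds
  have hne : ∀ᶠ t in l, t ≠ (0:ℂ) := self_mem_nhdsWithin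
  -- φ maps the punctured filter to itself
  have hφ_tendsto : Tendsto φ l l := by
    rw [hl, tendsto_nhdsWithin_iff]
    constructor
    · have := hid0.mul hg_tendsto
      rw [zero_mul] at this
      exact this.congr fun t => (hφ' t).symm
    · filter_upwards [hne, hg_tendsto.eventually_ne hc0] with t ht hgt
      rw [Set.mem_compl_iff, Set.mem_singleton_iff, hφ' t]
      exact mul_ne_zero ht hgt
  have hpowτ : Tendsto (fun t : ℂ => t ^ (s - 1)) l l := by
    rw [hl, tendsto_nhdsWithin_iff]
    refine ⟨hpow0 _ (by omega), ?_⟩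
    filter_upwards [hne] with t ht
    exact pow_ne_zero _ ht
  -- φ^k is big-O of t^k
  have hOφ : ∀ k : ℕ, (fun t => (φ t) ^ k) =O[l] fun t => t ^ k := by
    intro k
    have h1 : (fun t : ℂ => t ^ k * (g t) ^ k) =O[l] fun t => t ^ k * 1 :=
      (isBigO_refl _ _).mul ((hg_tendsto.pow k).isBigO_one ℂ)
    simpa [hφ', mul_pow] using h1
  have hpowo : (fun t : ℂ => t ^ B1) =o[l] fun t => t ^ n :=
    (isLittleO_pow_pow hB1).mono nhdsWithin_le_nhds
  -- derivative computation
  have hder : HasDerivAt (fun w : ℂ => (c + d * w) ^ m) ((m : ℂ) * c ^ (m - 1) * d) 0 := by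
    have h1 : HasDerivAt (fun w : ℂ => c + d * w) d 0 := by
      simpa using ((hasDerivAt_id (0 : ℂ)).const_mul d).const_add c
    simpa using h1.fun_pow m
  have hslope : Tendsto (fun w : ℂ => ((c + d * w) ^ m - 1) / w) l
      (𝓝 ((m : ℂ) * c ^ (m - 1) * d)) := by
    have h2 := hasDerivAt_iff_tendsto_slope.mp hder
    refine h2.congr fun w => ?_
    rw [slope_def_field]
    simp [hc]
  have hkey : Tendsto (fun t : ℂ => (1 - (g t) ^ m) / t ^ (s - 1)) l
      (𝓝 (-((m : ℂ) * c ^ (m - 1) * d))) := by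
    have h3 := (hslope.comp hpowτ).neg
    refine h3.congr fun t => ?_
    simp only [Function.comp_apply, hg_def]
    ring
  -- little-o facts
  have T_r : Tendsto (fun t => (q t - ((B1 : ℂ) / (n : ℂ)) * t ^ m) / t ^ n) l (𝓝 0) :=
    hq.tendsto_div_nhds_zero
  have hqφ : (fun t => q (φ t) - ((B1 : ℂ) / (n : ℂ)) * (φ t) ^ m) =o[l] fun t => t ^ n := by
    have := (hq.comp_tendsto hφ_tendsto).trans_isBigO (hOφ n)
    simpa [Function.comp_def] using this
  have T_rφ : Tendsto (fun t => (q (φ t) - ((B1 : ℂ) / (n : ℂ)) * (φ t) ^ m) / t ^ n) l (𝓝 0) :=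
    hqφ.tendsto_div_nhds_zero
  -- q tends to 0
  have hq0 : Tendsto q l (𝓝 0) := by
    have h1 : Tendsto (fun t : ℂ => ((B1 : ℂ) / (n : ℂ)) * t ^ m) l (𝓝 0) := by
      simpa using (hpow0 m hm0).const_mul ((B1 : ℂ) / (n : ℂ))
    have h2 : Tendsto (fun t => q t - ((B1 : ℂ) / (n : ℂ)) * t ^ m) l (𝓝 0) := by
      have h3 := T_r.mul (hpow0 n (by omega))
      rw [mul_zero] at h3
      refine h3.congr' ?_
      filter_upwards [hne] with t ht
      field_simp
    simpa using h2.add h1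
  -- coordinate 3 numerator is o(t^n)
  have h3o : (fun t => η2 t - η2 (φ t)) =o[l] fun t => t ^ n := by
    have hA' : (fun t => η2 t - t ^ B1) =o[l] fun t : ℂ => t ^ n := hη2.trans hpowo
    have hB' : (fun t => η2 (φ t) - (φ t) ^ B1) =o[l] fun t : ℂ => t ^ n := by
      have := ((hη2.comp_tendsto hφ_tendsto).trans_isBigO (hOφ B1)).trans hpowo
      simpa [Function.comp_def] using this
    have hC' : (fun t : ℂ => t ^ B1 - (φ t) ^ B1) =o[l] fun t : ℂ => t ^ n :=
      hpowo.sub ((hOφ B1).trans_isLittleO hpowo)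
    have := (hA'.sub hB').add hC'
    refine this.congr' (Eventually.of_forall fun t => ?_) EventuallyEq.rfl
    ring
  have T_3 : Tendsto (fun t => (η2 t - η2 (φ t)) / t ^ n) l (𝓝 0) :=
    h3o.tendsto_div_nhds_zero
  -- the coordinatewise limits
  have h1coord : Tendsto (fun t : ℂ => (t ^ n)⁻¹ * (A * t ^ n * 1 + B * 0)) l (𝓝 A) := by
    refine tendsto_const_nhds.congr' ?_
    filter_upwards [hne] with t ht
    have htn : t ^ n ≠ 0 := pow_ne_zero _ ht
    field_simp
    ring
  have h2coord : Tendsto (fun t : ℂ => (t ^ n)⁻¹ * (A * t ^ n * 0 + B * (t ^ n - φ t ^ n))) l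
      (𝓝 (B * (1 - c ^ n))) := by
    have h1 : Tendsto (fun t => B * (1 - (g t) ^ n)) l (𝓝 (B * (1 - c ^ n))) :=
      ((hg_tendsto.pow n).const_sub 1).const_mul B
    refine h1.congr' ?_
    filter_upwards [hne] with t ht
    have htn : t ^ n ≠ 0 := pow_ne_zero _ ht
    rw [hφ' t, mul_pow]
    field_simp
    ring
  have h3coord : Tendsto (fun t : ℂ => (t ^ n)⁻¹ * (A * t ^ n * 0 + B * (η2 t - η2 (φ t)))) l
      (𝓝 0) := by
    have h1 := T_3.const_mul B
    rw [mul_zero] at h1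
    refine h1.congr fun t => ?_
    ring
  have hval : A * -(0:ℂ) + B * (((B1 : ℂ) / (n : ℂ)) * -((m : ℂ) * c ^ (m - 1) * d) + 0 - 0)
      = -B * (((B1 : ℂ) * ((B1 : ℂ) - (n : ℂ))) / (n : ℂ)) * c ^ (m - 1) * d := by
    have hcast : ((m : ℕ) : ℂ) = (B1 : ℂ) - (n : ℂ) := by
      rw [hm, Nat.cast_sub hB1.le]
    rw [hcast]
    ring
  have h0coord : Tendsto (fun t : ℂ => (t ^ n)⁻¹ * (A * t ^ n * -q t + B * (q t - q (φ t)))) l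
      (𝓝 (-B * (((B1 : ℂ) * ((B1 : ℂ) - (n : ℂ))) / (n : ℂ)) * c ^ (m - 1) * d)) := by
    have h1 : Tendsto (fun t : ℂ =>
        A * -q t + B * (((B1 : ℂ) / (n : ℂ)) * ((1 - (g t) ^ m) / t ^ (s - 1))
          + (q t - ((B1 : ℂ) / (n : ℂ)) * t ^ m) / t ^ n
          - (q (φ t) - ((B1 : ℂ) / (n : ℂ)) * (φ t) ^ m) / t ^ n)) l
        (𝓝 (A * -(0:ℂ) + B * (((B1 : ℂ) / (n : ℂ)) * -((m : ℂ) * c ^ (m - 1) * d) + 0 - 0))) :=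
      (hq0.neg.const_mul A).add
        ((((hkey.const_mul _).add T_r).sub T_rφ).const_mul B)
    rw [hval] at h1
    refine h1.congr' ?_
    have key : ∀ (a b Q Q' G k : ℂ), a ≠ 0 → b ≠ 0 →
        A * -Q + B * (k * ((1 - G) / b) + (Q - k * a) / (a * b) - (Q' - k * (a * G)) / (a * b)) =
        (a * b)⁻¹ * (A * (a * b) * -Q + B * (Q - Q')) := by
      intro a b Q Q' G k ha hb
      field_simp
      ring
    filter_upwards [hne] with t ht
    have htm : t ^ m ≠ 0 := pow_ne_zero _ ht
    have hts : t ^ (s - 1) ≠ 0 := pow_ne_zero _ ht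
    have htn : t ^ n = t ^ m * t ^ (s - 1) := by rw [← pow_add, hmn]
    have hφm : (φ t) ^ m = t ^ m * (g t) ^ m := by rw [hφ' t, mul_pow]
    rw [htn, hφm]
    exact key (t ^ m) (t ^ (s - 1)) (q t) (q (φ t)) ((g t) ^ m) ((B1 : ℂ) / (n : ℂ)) htm hts
  constructor
  · rw [tendsto_pi_nhds]
    intro i
    fin_cases i <;>
      simp only [hW, Pi.smul_apply, Pi.add_apply, smul_eq_mul, Fin.isValue,
        Matrix.cons_val_zero, Matrix.cons_val_one, Matrix.head_cons,
        Matrix.cons_val_two, Matrix.tail_cons, Matrix.cons_val_three,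
        Matrix.cons_val_fin_one, Fin.mk_one]
    · exact h0coord
    · exact h1coord
    · exact h2coord
    · exact h3coord
  · intro hAB hzero
    have h1 := congrFun hzero 1
    have h2 := congrFun hzero 2
    simp only [Matrix.cons_val_one, Matrix.head_cons, Matrix.cons_val_zero, Pi.zero_apply] at h1
    simp only [Matrix.cons_val_two, Matrix.tail_cons, Matrix.head_cons, Pi.zero_apply] at h2
    have hB0 : B = 0 := by
      rcases mul_eq_zero.mp h2 with h | h
      · exact h
      · exact absurd (by linear_combination -h : c ^ n = 1) hc'
    exact hAB (by simp [h1, hB0])
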